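/- Fix a real parameter c and a natural number l. For every natural number ν and all reals x₁ > 0, x₂ > 0, the complementary polynomials of the confluent hypergeometric equation satisfy the addition law Σ_{λ=0}^{ν} C(c−1+l, ν−λ)·(ν!/λ!)·𝒫_λ(x₁+x₂, l) = Σ_{ν₁=0}^{ν} binom(ν,ν₁)·𝒫_{ν₁}(x₁,l)·𝒫_{ν−ν₁}(x₂,l), where C(r,k) = (∏_{i=0}^{k−1}(r−i))/k! is the generalized binomial coefficient. -/

import Mathlib

/-- Complementary polynomial of the confluent hypergeometric equation:
`𝒫_ν(x,l) = x^(1-c+ν-l) · e^x · (dᵛ/dtᵛ)(t^(c-1+l) e^(-t)) |_{t=x}` (rpow powers). -/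
noncomputable def complConfluent (c : ℝ) (l ν : ℕ) (x : ℝ) : ℝ :=
  x ^ (1 - c + (ν : ℝ) - (l : ℝ)) * Real.exp x *
    iteratedDeriv ν (fun t : ℝ => t ^ (c - 1 + (l : ℝ)) * Real.exp (-t)) x

/-- Generalized binomial coefficient `C(r,k) = (∏_{i<k} (r-i)) / k!`. -/
noncomputable def genBinom (r : ℝ) (k : ℕ) : ℝ :=
  (∏ i ∈ Finset.range k, (r - (i : ℝ))) / (Nat.factorial k : ℝ)

open Finset PowerSeries

noncomputable def F (a : ℝ) (j : ℕ) : ℝ := ∏ i ∈ Finset.range j, (a - (i:ℝ))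

lemma neg_one_pow_sub {ν j : ℕ} (h : j ≤ ν) : ((-1:ℝ))^(ν-j) = (-1)^ν * (-1)^j := by
  obtain ⟨k, rfl⟩ := Nat.exists_eq_add_of_le h
  rw [Nat.add_sub_cancel_left, pow_add, mul_right_comm, ← mul_pow]
  norm_num

lemma iter_deriv (a : ℝ) (ν : ℕ) :
    ∀ x : ℝ, 0 < x → iteratedDeriv ν (fun t : ℝ => t ^ a * Real.exp (-t)) x
      = (∑ j ∈ Finset.range (ν+1),
          (ν.choose j : ℝ) * F a j * ((-1)^ν * (-1)^j) * x ^ (a - j)) * Real.exp (-x) := by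
  induction ν with
  | zero => intro x hx; simp [F]
  | succ ν ih =>
    intro x hx
    rw [iteratedDeriv_succ]
    have hev : iteratedDeriv ν (fun t : ℝ => t ^ a * Real.exp (-t)) =ᶠ[nhds x]
        (fun y => (∑ j ∈ Finset.range (ν+1),
          (ν.choose j : ℝ) * F a j * ((-1)^ν * (-1)^j) * y ^ (a - j)) * Real.exp (-y)) := by
      filter_upwards [Ioi_mem_nhds hx] with y hy using ih y hy
    rw [hev.deriv_eq]
    have hd : HasDerivAt (fun y : ℝ => (∑ j ∈ Finset.range (ν+1),
          (ν.choose j : ℝ) * F a j * ((-1)^ν * (-1)^j) * y ^ (a - j)) * Real.exp (-y))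
        ((∑ j ∈ Finset.range (ν+1),
          (ν.choose j : ℝ) * F a j * ((-1)^ν * (-1)^j) * ((a - j) * x ^ (a - j - 1))) * Real.exp (-x)
          + (∑ j ∈ Finset.range (ν+1),
          (ν.choose j : ℝ) * F a j * ((-1)^ν * (-1)^j) * x ^ (a - j)) * (Real.exp (-x) * (-1))) x := by
      apply HasDerivAt.mul
      · apply HasDerivAt.fun_sum
        intro j hj
        exact (Real.hasDerivAt_rpow_const (Or.inl hx.ne')).const_mul _
      · exact (hasDerivAt_neg x).exp
    rw [hd.deriv]
    have key : (∑ j ∈ Finset.range (ν+1+1),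
          (((ν+1).choose j : ℕ) : ℝ) * F a j * ((-1)^(ν+1) * (-1)^j) * x ^ (a - j))
        = (∑ j ∈ Finset.range (ν+1),
            (ν.choose j : ℝ) * F a j * ((-1)^ν * (-1)^j) * ((a - j) * x ^ (a - j - 1)))
          + (∑ j ∈ Finset.range (ν+1),
            (ν.choose j : ℝ) * F a j * ((-1)^ν * (-1)^j) * x ^ (a - j)) * (-1) := by
      rw [Finset.sum_range_succ']
      have h1 : ∀ i ∈ Finset.range (ν+1),
          (((ν+1).choose (i+1) : ℕ) : ℝ) * F a (i+1) * ((-1)^(ν+1) * (-1)^(i+1)) * x ^ (a - ((i+1:ℕ):ℝ))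
          = (ν.choose i : ℝ) * F a i * ((-1)^ν * (-1)^i) * ((a - i) * x ^ (a - i - 1))
            + (ν.choose (i+1) : ℝ) * F a (i+1) * ((-1)^ν * (-1)^i) * x ^ (a - ((i+1:ℕ):ℝ)) := by
        intro i hi
        have hF : F a (i+1) = F a i * (a - i) := Finset.prod_range_succ _ _
        have he : a - ((i+1:ℕ):ℝ) = a - i - 1 := by push_cast; ring
        have hsgn : ((-1:ℝ))^(ν+1) * (-1)^(i+1) = (-1)^ν * (-1)^i := by
          rw [pow_succ, pow_succ]; ring
        rw [hsgn, he, hF, Nat.choose_succ_succ]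
        push_cast
        ring
      rw [Finset.sum_congr rfl h1, Finset.sum_add_distrib, add_assoc]
      congr 1
      rw [Finset.sum_range_succ]
      have hz : (ν.choose (ν+1) : ℝ) = 0 := by simp [Nat.choose_succ_self]
      rw [hz, zero_mul, zero_mul, zero_mul, add_zero,
        Finset.sum_range_succ' (fun j => (ν.choose j : ℝ) * F a j * ((-1)^ν * (-1)^j) * x ^ (a - (j:ℝ))),
        add_mul, Finset.sum_mul]
      congr 1
      · apply Finset.sum_congr rfl
        intro i hi
        rw [pow_succ]
        ring
      · simp [F, pow_succ]
    rw [key]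
    ring
lemma complConfluent_eq (c : ℝ) (l ν : ℕ) {x : ℝ} (hx : 0 < x) :
    complConfluent c l ν x = ∑ j ∈ Finset.range (ν+1),
      (ν.choose j : ℝ) * F (c - 1 + (l:ℝ)) j * ((-1)^ν * (-1)^j) * x ^ (ν - j) := by
  have hexp : Real.exp x * Real.exp (-x) = 1 := by rw [← Real.exp_add]; simp
  rw [complConfluent, iter_deriv (c-1+(l:ℝ)) ν x hx]
  rw [show x ^ (1 - c + (ν : ℝ) - (l : ℝ)) * Real.exp x *
      ((∑ j ∈ Finset.range (ν+1),
          (ν.choose j : ℝ) * F (c - 1 + (l:ℝ)) j * ((-1)^ν * (-1)^j) * x ^ (c - 1 + (l:ℝ) - j)) * Real.exp (-x))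
      = x ^ (1 - c + (ν : ℝ) - (l : ℝ)) * (∑ j ∈ Finset.range (ν+1),
          (ν.choose j : ℝ) * F (c - 1 + (l:ℝ)) j * ((-1)^ν * (-1)^j) * x ^ (c - 1 + (l:ℝ) - j))
        * (Real.exp x * Real.exp (-x)) from by ring, hexp, mul_one, Finset.mul_sum]
  apply Finset.sum_congr rfl
  intro j hj
  have hj' : j ≤ ν := Nat.lt_succ_iff.mp (Finset.mem_range.mp hj)
  have hpow : x ^ (1 - c + (ν : ℝ) - (l : ℝ)) * x ^ (c - 1 + (l:ℝ) - j)
      = x ^ ((ν - j : ℕ) : ℝ) := by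
    rw [← Real.rpow_add hx]
    congr 1
    rw [Nat.cast_sub hj']
    ring
  rw [show x ^ (1 - c + (ν : ℝ) - (l : ℝ)) *
      ((ν.choose j : ℝ) * F (c - 1 + (l:ℝ)) j * ((-1)^ν * (-1)^j) * x ^ (c - 1 + (l:ℝ) - (j:ℝ)))
      = (ν.choose j : ℝ) * F (c - 1 + (l:ℝ)) j * ((-1)^ν * (-1)^j)
        * (x ^ (1 - c + (ν : ℝ) - (l : ℝ)) * x ^ (c - 1 + (l:ℝ) - (j:ℝ))) from by ring,
    hpow, Real.rpow_natCast]

noncomputable def AA (a : ℝ) : PowerSeries ℝ :=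
  PowerSeries.mk fun j => F a j / (Nat.factorial j : ℝ)

noncomputable def BB (x : ℝ) : PowerSeries ℝ :=
  PowerSeries.rescale (-x) (PowerSeries.exp ℝ)

lemma coeff_BB (x : ℝ) (m : ℕ) :
    PowerSeries.coeff m (BB x) = (-x)^m / (m.factorial : ℝ) := by
  rw [BB, PowerSeries.coeff_rescale, PowerSeries.coeff_exp,
    eq_ratCast (algebraMap ℚ ℝ)]
  push_cast
  ring

lemma complConfluent_coeff (c : ℝ) (l ν : ℕ) {x : ℝ} (hx : 0 < x) :
    complConfluent c l ν x
      = (ν.factorial : ℝ) * PowerSeries.coeff ν (AA (c - 1 + (l:ℝ)) * BB x) := by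
  rw [complConfluent_eq c l ν hx, PowerSeries.coeff_mul,
    Nat.sum_antidiagonal_eq_sum_range_succ_mk, Finset.mul_sum]
  apply Finset.sum_congr rfl
  intro j hj
  have hj' : j ≤ ν := Nat.lt_succ_iff.mp (Finset.mem_range.mp hj)
  rw [AA, PowerSeries.coeff_mk, coeff_BB]
  have hchoose : (ν.choose j : ℝ) = (ν.factorial : ℝ) / ((j.factorial : ℝ) * ((ν-j).factorial : ℝ)) :=
    Nat.cast_choose ℝ hj'
  rw [hchoose, neg_pow x (ν-j), neg_one_pow_sub hj']
  have h1 : (j.factorial : ℝ) ≠ 0 := Nat.cast_ne_zero.mpr (Nat.factorial_ne_zero j)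
  have h2 : ((ν-j).factorial : ℝ) ≠ 0 := Nat.cast_ne_zero.mpr (Nat.factorial_ne_zero _)
  field_simp

theorem complConfluent_addition (c : ℝ) (l ν : ℕ) (x₁ x₂ : ℝ) (hx₁ : 0 < x₁)
    (hx₂ : 0 < x₂) :
    (∑ lam ∈ Finset.range (ν + 1),
        genBinom (c - 1 + (l : ℝ)) (ν - lam)
          * ((Nat.factorial ν : ℝ) / (Nat.factorial lam : ℝ))
          * complConfluent c l lam (x₁ + x₂))
      = ∑ ν₁ ∈ Finset.range (ν + 1),
          (Nat.choose ν ν₁ : ℝ) * complConfluent c l ν₁ x₁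
            * complConfluent c l (ν - ν₁) x₂ := by
  set a := c - 1 + (l:ℝ) with ha
  have hx₁₂ : 0 < x₁ + x₂ := by linarith
  have hL : (∑ lam ∈ Finset.range (ν + 1),
        genBinom a (ν - lam) * ((Nat.factorial ν : ℝ) / (Nat.factorial lam : ℝ))
          * complConfluent c l lam (x₁ + x₂))
      = (ν.factorial : ℝ) * PowerSeries.coeff ν ((AA a * BB (x₁ + x₂)) * AA a) := by
    rw [PowerSeries.coeff_mul, Nat.sum_antidiagonal_eq_sum_range_succ_mk, Finset.mul_sum]
    apply Finset.sum_congr rfl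
    intro lam hlam
    rw [complConfluent_coeff c l lam hx₁₂]
    have hgb : genBinom a (ν - lam) = PowerSeries.coeff (ν - lam) (AA a) := by
      rw [AA, PowerSeries.coeff_mk, genBinom, F]
    rw [hgb]
    have h1 : (lam.factorial : ℝ) ≠ 0 := Nat.cast_ne_zero.mpr (Nat.factorial_ne_zero _)
    field_simp
    ring
  have hR : (∑ ν₁ ∈ Finset.range (ν + 1),
        (Nat.choose ν ν₁ : ℝ) * complConfluent c l ν₁ x₁ * complConfluent c l (ν - ν₁) x₂)
      = (ν.factorial : ℝ) * PowerSeries.coeff ν ((AA a * BB x₁) * (AA a * BB x₂)) := by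
    rw [PowerSeries.coeff_mul, Nat.sum_antidiagonal_eq_sum_range_succ_mk, Finset.mul_sum]
    apply Finset.sum_congr rfl
    intro ν₁ hν₁
    have hν₁' : ν₁ ≤ ν := Nat.lt_succ_iff.mp (Finset.mem_range.mp hν₁)
    rw [complConfluent_coeff c l ν₁ hx₁, complConfluent_coeff c l (ν - ν₁) hx₂]
    have hfac : (ν.choose ν₁ : ℝ) * (ν₁.factorial : ℝ) * ((ν - ν₁).factorial : ℝ)
        = (ν.factorial : ℝ) := by
      rw [← Nat.cast_mul, ← Nat.cast_mul, Nat.choose_mul_factorial_mul_factorial hν₁']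
    rw [← hfac]
    ring
  rw [hL, hR]
  congr 1
  have hB : BB x₁ * BB x₂ = BB (x₁ + x₂) := by
    rw [BB, BB, BB, PowerSeries.exp_mul_exp_eq_exp_add]
    congr 1
    ring
  rw [← hB]
  ring
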